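/- arXiv:2605.21317 — 4 statements merged into one kernel-verified Lean document; each statement's English description precedes it below -/
import Mathlib

section
/- Let d, N ≥ 1, let f_1, …, f_N : ℝ^d → ℝ be differentiable with L-Lipschitz gradients, and suppose ‖∇f_i(θ)‖ ≤ G_f for all i and θ. Fix a local learning rate η_l > 0 and, for each client i, a number K_i ≥ 1 of local steps. For any starting point θ ∈ ℝ^d, define the local gradient-descent trajectory θ_i^{0} = θ and θ_i^{k+1} = θ_i^{k} − η_l ∇f_i(θ_i^{k}) for 0 ≤ k ≤ K_i − 1, and the accumulated client update g_i = θ − θ_i^{K_i} = η_l · Σ_{k=0}^{K_i−1} ∇f_i(θ_i^{k}). Then g_i = η_l K_i ∇f_i(θ) + e_i, where the drift e_i := η_l · Σ_{k=0}^{K_i−1} (∇f_i(θ_i^{k}) − ∇f_i(θ)) satisfies ‖e_i‖ ≤ (L G_f / 2) · η_l² · K_i (K_i − 1). -/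
open scoped InnerProductSpace BigOperators

/-- Local gradient-descent trajectory: `traj f ηl θ 0 = θ`,
`traj f ηl θ (k+1) = traj f ηl θ k - ηl • ∇f(traj f ηl θ k)`. -/
noncomputable def traj {E : Type*} [NormedAddCommGroup E] [InnerProductSpace ℝ E]
    [CompleteSpace E] (f : E → ℝ) (ηl : ℝ) (θ : E) : ℕ → E
  | 0 => θ
  | k + 1 => traj f ηl θ k - ηl • gradient f (traj f ηl θ k)

lemma traj_telescope {E : Type*} [NormedAddCommGroup E] [InnerProductSpace ℝ E]
    [CompleteSpace E] (f : E → ℝ) (ηl : ℝ) (θ : E) (n : ℕ) :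
    θ - traj f ηl θ n = ηl • ∑ k ∈ Finset.range n, gradient f (traj f ηl θ k) := by
  induction n with
  | zero => simp [traj]
  | succ n ih =>
    rw [Finset.sum_range_succ, smul_add, ← ih, traj]
    abel

lemma traj_dist {E : Type*} [NormedAddCommGroup E] [InnerProductSpace ℝ E]
    [CompleteSpace E] (f : E → ℝ) (ηl Gf : ℝ) (hηl : 0 ≤ ηl)
    (hGf : ∀ x, ‖gradient f x‖ ≤ Gf) (θ : E) (n : ℕ) :
    ‖traj f ηl θ n - θ‖ ≤ ηl * Gf * n := by
  induction n with
  | zero => simp [traj]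
  | succ n ih =>
    have h : traj f ηl θ (n+1) - θ = (traj f ηl θ n - θ) - ηl • gradient f (traj f ηl θ n) := by
      rw [traj]; abel
    rw [h]
    calc ‖(traj f ηl θ n - θ) - ηl • gradient f (traj f ηl θ n)‖
        ≤ ‖traj f ηl θ n - θ‖ + ‖ηl • gradient f (traj f ηl θ n)‖ := norm_sub_le _ _
      _ ≤ ηl * Gf * n + ηl * Gf := by
          gcongr
          rw [norm_smul, Real.norm_of_nonneg hηl]
          exact mul_le_mul_of_nonneg_left (hGf _) hηl
      _ = ηl * Gf * (n + 1 : ℕ) := by push_cast; ring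

/-- **Local drift bound.** The accumulated client update
`gᵢ = θ − θᵢ^{Kᵢ} = ηl • Σ_{k<Kᵢ} ∇fᵢ(θᵢ^k)` decomposes as
`gᵢ = ηl Kᵢ ∇fᵢ(θ) + eᵢ` with `‖eᵢ‖ ≤ (L G_f/2) ηl² Kᵢ (Kᵢ − 1)`. -/
theorem local_drift_bound {d N : ℕ} (hd : 1 ≤ d) (hN : 1 ≤ N)
    (f : Fin N → EuclideanSpace ℝ (Fin d) → ℝ) (L Gf ηl : ℝ)
    (hdiff : ∀ i, Differentiable ℝ (f i))
    (hLip : ∀ i x y, ‖gradient (f i) x - gradient (f i) y‖ ≤ L * ‖x - y‖)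
    (hGf : ∀ i x, ‖gradient (f i) x‖ ≤ Gf)
    (hηl : 0 < ηl)
    (K : Fin N → ℕ) (hK : ∀ i, 1 ≤ K i)
    (θ : EuclideanSpace ℝ (Fin d)) (i : Fin N)
    (g e : EuclideanSpace ℝ (Fin d))
    (hg : g = θ - traj (f i) ηl θ (K i))
    (he : e = ηl • ∑ k ∈ Finset.range (K i),
        (gradient (f i) (traj (f i) ηl θ k) - gradient (f i) θ)) :
    g = ηl • ∑ k ∈ Finset.range (K i), gradient (f i) (traj (f i) ηl θ k) ∧
    g = (ηl * (K i : ℝ)) • gradient (f i) θ + e ∧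
    ‖e‖ ≤ L * Gf / 2 * ηl ^ 2 * (K i : ℝ) * ((K i : ℝ) - 1) := by
  have h1 : g = ηl • ∑ k ∈ Finset.range (K i), gradient (f i) (traj (f i) ηl θ k) := by
    rw [hg]; exact traj_telescope _ _ _ _
  refine ⟨h1, ?_, ?_⟩
  · rw [h1, he, mul_smul, ← smul_add]
    congr 1
    rw [Finset.sum_sub_distrib, Finset.sum_const, Finset.card_range,
      ← Nat.cast_smul_eq_nsmul ℝ]
    abel
  · have hL : 0 ≤ L := by
      have hv : (EuclideanSpace.single (⟨0, hd⟩ : Fin d) (1:ℝ)) ≠ 0 := by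
        intro h
        have := congrArg (fun v : EuclideanSpace ℝ (Fin d) => v (⟨0, hd⟩ : Fin d)) h
        simpa using this
      have h3 := hLip i (EuclideanSpace.single (⟨0, hd⟩ : Fin d) (1:ℝ)) 0
      have hn : (0:ℝ) < ‖(EuclideanSpace.single (⟨0, hd⟩ : Fin d) (1:ℝ)) - 0‖ := by
        simpa using norm_pos_iff.mpr hv
      nlinarith [norm_nonneg (gradient (f i) (EuclideanSpace.single (⟨0, hd⟩ : Fin d) (1:ℝ)) - gradient (f i) 0)]
    have hGsum : ∀ n : ℕ, ∑ k ∈ Finset.range n, (k:ℝ) = (n : ℝ) * ((n : ℝ) - 1) / 2 := by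
      intro n
      induction n with
      | zero => simp
      | succ n ih => rw [Finset.sum_range_succ, ih]; push_cast; ring
    rw [he, norm_smul, Real.norm_of_nonneg hηl.le]
    calc ηl * ‖∑ k ∈ Finset.range (K i),
          (gradient (f i) (traj (f i) ηl θ k) - gradient (f i) θ)‖
        ≤ ηl * ∑ k ∈ Finset.range (K i), (L * (ηl * Gf * k)) := by
          gcongr
          refine (norm_sum_le _ _).trans (Finset.sum_le_sum fun k _ => ?_)
          exact (hLip i _ _).trans (mul_le_mul_of_nonneg_left
            (traj_dist (f i) ηl Gf hηl.le (hGf i) θ k) hL)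
      _ = L * Gf / 2 * ηl ^ 2 * (K i : ℝ) * ((K i : ℝ) - 1) := by
          simp only [← Finset.mul_sum]; rw [hGsum (K i)]; ring
end

section
/- (Convergence bound for CRAFT under full participation.) Let d, N ≥ 1, let f_1, …, f_N : ℝ^d → ℝ be L-smooth with ‖∇f_i(θ)‖ ≤ G_f for all i, θ; let ρ_1, …, ρ_N > 0 with Σ ρ_i = 1; set F = Σ ρ_i f_i, and assume F(θ) ≥ F⋆ for all θ. Fix η_l > 0, η_g > 0, local step counts K_i ≥ 1 with K_max = max_i K_i, ρ_min = min_i ρ_i, c = ρ_min/G_f. Consider a server trajectory θ_{t+1} = θ_t − η_g g_t, t = 0, …, T−1, where at each round the accumulated client updates g_i^t (from K_i local gradient-descent steps of rate η_l starting at θ_t) are all nonzero, the aggregate g_t satisfies the exact alignment constraints ⟨g_i^t/‖g_i^t‖, g_t⟩ = ρ_i for all i, and ‖g_t‖ ≤ G. Then for any T ≥ 1: (1/T) Σ_{t=0}^{T−1} ‖∇F(θ_t)‖² ≤ (F(θ_0) − F⋆)/(c η_g T) + L η_g G²/(2c) + (B_drift/c) η_l (K_max − 1), where B_drift = (L G_f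 / 2)(G + Σ_{i=1}^N ρ_i²). -/
open scoped InnerProductSpace BigOperators

lemma craft_descent {E : Type*} [NormedAddCommGroup E] [InnerProductSpace ℝ E] [CompleteSpace E]
    {F : E → ℝ} {L : ℝ} (hL : 0 ≤ L) (hdiff : Differentiable ℝ F)
    (hLip : ∀ x y, ‖gradient F x - gradient F y‖ ≤ L * ‖x - y‖) (x y : E) :
    F y ≤ F x + ⟪gradient F x, y - x⟫_ℝ + L / 2 * ‖y - x‖ ^ 2 := by
  set v := y - x with hv
  have hinner : ∀ z w : E, (fderiv ℝ F z) w = ⟪gradient F z, w⟫_ℝ := by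
    intro z w
    rw [gradient, InnerProductSpace.toDual_symm_apply]
  set φ : ℝ → ℝ := fun t => F (x + t • v) - t * ⟪gradient F x, v⟫_ℝ - L * t ^ 2 / 2 * ‖v‖ ^ 2
    with hφ
  have hline : ∀ t : ℝ, HasDerivAt (fun s : ℝ => x + s • v) v t := by
    intro t
    simpa using ((hasDerivAt_id t).smul_const v).const_add x
  have hφ' : ∀ t : ℝ, HasDerivAt φ
      (⟪gradient F (x + t • v) - gradient F x, v⟫_ℝ - L * t * ‖v‖ ^ 2) t := by
    intro t
    have h1 : HasDerivAt (fun s : ℝ => F (x + s • v)) (⟪gradient F (x + t • v), v⟫_ℝ) t := by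
      have := (hdiff (x + t • v)).hasFDerivAt.comp_hasDerivAt t (hline t)
      rw [hinner] at this
      exact this
    have h2 : HasDerivAt (fun s : ℝ => s * ⟪gradient F x, v⟫_ℝ) (⟪gradient F x, v⟫_ℝ) t :=
      hasDerivAt_mul_const _
    have h3 : HasDerivAt (fun s : ℝ => L * s ^ 2 / 2 * ‖v‖ ^ 2) (L * t * ‖v‖ ^ 2) t := by
      have := (((hasDerivAt_pow 2 t).const_mul L).div_const 2).mul_const (‖v‖ ^ 2)
      exact this.congr_deriv (by ring)
    have h4 := (h1.sub h2).sub h3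
    exact h4.congr_deriv (by rw [inner_sub_left])

  have hdφ : Differentiable ℝ φ := fun t => (hφ' t).differentiableAt
  have hanti : AntitoneOn φ (Set.Icc (0:ℝ) 1) := by
    apply antitoneOn_of_deriv_nonpos (convex_Icc 0 1) hdφ.continuous.continuousOn
      hdφ.differentiableOn
    intro t ht
    rw [interior_Icc] at ht
    rw [(hφ' t).deriv]
    have hb1 : ⟪gradient F (x + t • v) - gradient F x, v⟫_ℝ ≤
        ‖gradient F (x + t • v) - gradient F x‖ * ‖v‖ := real_inner_le_norm _ _
    have hb2 : ‖gradient F (x + t • v) - gradient F x‖ ≤ L * (t * ‖v‖) := by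
      have := hLip (x + t • v) x
      simpa [norm_smul, abs_of_pos ht.1] using this
    have hb3 : ‖gradient F (x + t • v) - gradient F x‖ * ‖v‖ ≤ L * (t * ‖v‖) * ‖v‖ :=
      mul_le_mul_of_nonneg_right hb2 (norm_nonneg _)
    nlinarith [norm_nonneg v]
  have h01 : φ 1 ≤ φ 0 :=
    hanti (Set.left_mem_Icc.mpr zero_le_one) (Set.right_mem_Icc.mpr zero_le_one) zero_le_one
  have hφ0 : φ 0 = F x := by simp [hφ]
  have hφ1 : φ 1 = F y - ⟪gradient F x, v⟫_ℝ - L / 2 * ‖v‖ ^ 2 := by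
    simp [hφ, hv]

  rw [hφ0, hφ1] at h01
  linarith

lemma craft_grad_sum {E : Type*} [NormedAddCommGroup E] [InnerProductSpace ℝ E]
    [CompleteSpace E] {N : ℕ} (f : Fin N → E → ℝ) (ρ : Fin N → ℝ)
    (hdiff : ∀ i, Differentiable ℝ (f i)) (x : E) :
    HasGradientAt (fun y => ∑ i, ρ i * f i y) (∑ i, ρ i • gradient (f i) x) x := by
  rw [hasGradientAt_iff_hasFDerivAt]
  have h1 : ∀ i : Fin N, HasFDerivAt (fun y => ρ i * f i y)
      (ρ i • (InnerProductSpace.toDual ℝ E (gradient (f i) x))) x :=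
    fun i => (((hdiff i) x).hasGradientAt.hasFDerivAt).const_mul (ρ i)
  have h2 := HasFDerivAt.fun_sum (fun i (_ : i ∈ Finset.univ) => h1 i)
  exact h2.congr_fderiv (by rw [map_sum]; exact Finset.sum_congr rfl fun i _ => by simp)

lemma craft_traj_dist {E : Type*} [NormedAddCommGroup E] [InnerProductSpace ℝ E]
    [CompleteSpace E] (f : E → ℝ) (ηl Gf : ℝ) (hηl : 0 ≤ ηl)
    (hGf : ∀ x, ‖gradient f x‖ ≤ Gf) (θ : E) :
    ∀ k, ‖traj f ηl θ k - θ‖ ≤ ηl * k * Gf := by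
  intro k
  induction k with
  | zero => simp [traj]
  | succ k ih =>
    have h1 : traj f ηl θ (k+1) - θ = (traj f ηl θ k - θ) - ηl • gradient f (traj f ηl θ k) := by
      rw [traj]; abel
    rw [h1]
    have h2 : ‖ηl • gradient f (traj f ηl θ k)‖ ≤ ηl * Gf := by
      rw [norm_smul, Real.norm_eq_abs, abs_of_nonneg hηl]
      exact mul_le_mul_of_nonneg_left (hGf _) hηl
    calc ‖(traj f ηl θ k - θ) - ηl • gradient f (traj f ηl θ k)‖
        ≤ ‖traj f ηl θ k - θ‖ + ‖ηl • gradient f (traj f ηl θ k)‖ := norm_sub_le _ _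
      _ ≤ ηl * k * Gf + ηl * Gf := add_le_add ih h2
      _ = ηl * (k + 1 : ℕ) * Gf := by push_cast; ring
set_option maxHeartbeats 1000000 in
/-- **Convergence bound for CRAFT under full participation.**
For a server trajectory `θ_{t+1} = θ_t − η_g g_t` whose aggregates satisfy the exact
alignment constraints with the (nonzero) accumulated client updates and `‖g_t‖ ≤ G`,
`(1/T) Σ_{t<T} ‖∇F(θ_t)‖² ≤ (F(θ₀)−F⋆)/(c η_g T) + L η_g G²/(2c)
  + (B_drift/c) η_l (K_max − 1)`. -/
theorem craft_convergence_bound {d N : ℕ} (hd : 1 ≤ d) (hN : 1 ≤ N)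
    (f : Fin N → EuclideanSpace ℝ (Fin d) → ℝ) (L Gf : ℝ)
    (hdiff : ∀ i, Differentiable ℝ (f i))
    (hLip : ∀ i x y, ‖gradient (f i) x - gradient (f i) y‖ ≤ L * ‖x - y‖)
    (hGf : ∀ i x, ‖gradient (f i) x‖ ≤ Gf)
    (ρ : Fin N → ℝ) (hρpos : ∀ i, 0 < ρ i) (hρsum : ∑ i, ρ i = 1)
    (F : EuclideanSpace ℝ (Fin d) → ℝ) (hF : F = fun x => ∑ i, ρ i * f i x)
    (Fstar : ℝ) (hFstar : ∀ x, Fstar ≤ F x)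
    (ρmin : ℝ) (hρminlb : ∀ i, ρmin ≤ ρ i) (hρminmem : ∃ i, ρ i = ρmin)
    (c : ℝ) (hc : c = ρmin / Gf)
    (ηl ηg : ℝ) (hηl : 0 < ηl) (hηg : 0 < ηg)
    (K : Fin N → ℕ) (hK : ∀ i, 1 ≤ K i)
    (Kmax : ℕ) (hKmaxub : ∀ i, K i ≤ Kmax) (hKmaxmem : ∃ i, K i = Kmax)
    (θt : ℕ → EuclideanSpace ℝ (Fin d)) (g : ℕ → EuclideanSpace ℝ (Fin d))
    (hstep : ∀ t, θt (t + 1) = θt t - ηg • g t)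
    (gI : ℕ → Fin N → EuclideanSpace ℝ (Fin d))
    (hgI : ∀ t i, gI t i = ηl • ∑ k ∈ Finset.range (K i),
        gradient (f i) (traj (f i) ηl (θt t) k))
    (hne : ∀ t i, gI t i ≠ 0)
    (halign : ∀ t i, ⟪‖gI t i‖⁻¹ • gI t i, g t⟫_ℝ = ρ i)
    (G : ℝ) (hG : ∀ t, ‖g t‖ ≤ G)
    (Bdrift : ℝ) (hB : Bdrift = L * Gf / 2 * (G + ∑ i, (ρ i) ^ 2))
    (T : ℕ) (hT : 1 ≤ T) :
    (1 / (T : ℝ)) * ∑ t ∈ Finset.range T, ‖gradient F (θt t)‖ ^ 2 ≤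
      (F (θt 0) - Fstar) / (c * ηg * T) + L * ηg * G ^ 2 / (2 * c)
      + Bdrift / c * (ηl * ((Kmax : ℝ) - 1)) := by
  classical
  have i0 : Fin N := ⟨0, hN⟩
  obtain ⟨im, him⟩ := hρminmem
  have hρmin0 : 0 < ρmin := him ▸ hρpos im
  have hGf0 : 0 < Gf := by
    by_contra h'
    push_neg at h'
    have hz : ∀ i x, gradient (f i) x = 0 := fun i x =>
      norm_le_zero_iff.mp ((hGf i x).trans h')
    exact hne 0 i0 (by rw [hgI]; simp [hz])
  have hc0 : 0 < c := hc ▸ div_pos hρmin0 hGf0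
  have hL0 : 0 ≤ L := by
    have h1 := hLip i0 (EuclideanSpace.single (⟨0, hd⟩ : Fin d) (1:ℝ)) 0
    have h2 : ‖(EuclideanSpace.single (⟨0, hd⟩ : Fin d) (1:ℝ)) - 0‖ = 1 := by
      simp
    rw [h2, mul_one] at h1
    exact le_trans (norm_nonneg _) h1
  have hG0 : 0 ≤ G := (norm_nonneg (g 0)).trans (hG 0)
  have hKmax1 : 1 ≤ Kmax := le_trans (hK i0) (hKmaxub i0)
  have hKmaxR : (1:ℝ) ≤ (Kmax:ℝ) := by exact_mod_cast hKmax1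
  -- gradient of F
  have hgradF : ∀ x, gradient F x = ∑ i, ρ i • gradient (f i) x := by
    intro x
    rw [hF]
    exact (craft_grad_sum f ρ hdiff x).gradient
  have hFdiff : Differentiable ℝ F := by
    rw [hF]
    exact fun x => (craft_grad_sum f ρ hdiff x).differentiableAt
  have hFLip : ∀ x y, ‖gradient F x - gradient F y‖ ≤ L * ‖x - y‖ := by
    intro x y
    rw [hgradF x, hgradF y, ← Finset.sum_sub_distrib]
    calc ‖∑ i, (ρ i • gradient (f i) x - ρ i • gradient (f i) y)‖
        ≤ ∑ i, ‖ρ i • gradient (f i) x - ρ i • gradient (f i) y‖ := norm_sum_le _ _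
      _ ≤ ∑ i, ρ i * (L * ‖x - y‖) := by
          apply Finset.sum_le_sum
          intro i _
          rw [← smul_sub, norm_smul, Real.norm_eq_abs, abs_of_pos (hρpos i)]
          exact mul_le_mul_of_nonneg_left (hLip i x y) (hρpos i).le
      _ = L * ‖x - y‖ := by rw [← Finset.sum_mul, hρsum, one_mul]
  have hgradFle : ∀ x, ‖gradient F x‖ ≤ Gf := by
    intro x
    rw [hgradF x]
    calc ‖∑ i, ρ i • gradient (f i) x‖ ≤ ∑ i, ‖ρ i • gradient (f i) x‖ := norm_sum_le _ _
      _ ≤ ∑ i, ρ i * Gf := by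
          apply Finset.sum_le_sum
          intro i _
          rw [norm_smul, Real.norm_eq_abs, abs_of_pos (hρpos i)]
          exact mul_le_mul_of_nonneg_left (hGf i x) (hρpos i).le
      _ = Gf := by rw [← Finset.sum_mul, hρsum, one_mul]
  set D : ℝ := L * ηl * Gf * ((Kmax:ℝ) - 1) / 2 with hD
  have hD0 : 0 ≤ D := by
    apply div_nonneg _ (by norm_num)
    apply mul_nonneg (by positivity)
    linarith
  -- key inner product bound
  have key : ∀ t, c * ‖gradient F (θt t)‖ ^ 2 - Bdrift * (ηl * ((Kmax:ℝ) - 1))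
      ≤ ⟪gradient F (θt t), g t⟫_ℝ := by
    intro t
    set x := θt t with hx
    set s : Fin N → EuclideanSpace ℝ (Fin d) := fun i =>
      ∑ k ∈ Finset.range (K i), gradient (f i) (traj (f i) ηl x k) with hs
    have hsinner : ∀ i, ⟪s i, g t⟫_ℝ = ρ i * ‖s i‖ := by
      intro i
      have h1 := halign t i
      have hnz : ‖gI t i‖ ≠ 0 := norm_ne_zero_iff.mpr (hne t i)
      rw [real_inner_smul_left, inv_mul_eq_div, div_eq_iff hnz] at h1
      have hgin : gI t i = ηl • s i := hgI t i
      rw [hgin, real_inner_smul_left, norm_smul, Real.norm_eq_abs, abs_of_pos hηl] at h1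
      have h1' : ηl * ⟪s i, g t⟫_ℝ = ηl * (ρ i * ‖s i‖) := by rw [h1]; ring
      exact mul_left_cancel₀ (ne_of_gt hηl) h1'
    set e : Fin N → EuclideanSpace ℝ (Fin d) := fun i =>
      gradient (f i) x - ((K i : ℝ))⁻¹ • s i with he
    have heD : ∀ i, ‖e i‖ ≤ D := by
      intro i
      have hKpos : (0:ℝ) < (K i : ℝ) := by exact_mod_cast hK i
      have hsum : e i = (K i : ℝ)⁻¹ • ∑ k ∈ Finset.range (K i),
          (gradient (f i) x - gradient (f i) (traj (f i) ηl x k)) := by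
        rw [he]
        simp only [Finset.sum_sub_distrib, smul_sub, Finset.sum_const, Finset.card_range]
        rw [← Nat.cast_smul_eq_nsmul ℝ, smul_smul, inv_mul_cancel₀ (ne_of_gt hKpos), one_smul]
      have hgauss : (∑ k ∈ Finset.range (K i), (k:ℝ)) = (K i : ℝ) * ((K i : ℝ) - 1) / 2 := by
        have h2 := congrArg (Nat.cast : ℕ → ℝ) (Finset.sum_range_id_mul_two (K i))
        push_cast [Nat.cast_sub (hK i)] at h2
        linarith
      have hterm : ∀ k ∈ Finset.range (K i),
          ‖gradient (f i) x - gradient (f i) (traj (f i) ηl x k)‖ ≤ L * (ηl * k * Gf) := by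
        intro k _
        refine (hLip i x (traj (f i) ηl x k)).trans ?_
        rw [← norm_sub_rev]
        exact mul_le_mul_of_nonneg_left (craft_traj_dist (f i) ηl Gf hηl.le (hGf i) x k) hL0
      have hsum2 : ∑ k ∈ Finset.range (K i), (L * (ηl * (k:ℝ) * Gf))
          = L * ηl * Gf * ((K i:ℝ) * ((K i:ℝ) - 1) / 2) := by
        rw [← hgauss, Finset.mul_sum]
        exact Finset.sum_congr rfl fun k _ => by ring
      calc ‖e i‖ = (K i : ℝ)⁻¹ * ‖∑ k ∈ Finset.range (K i),
            (gradient (f i) x - gradient (f i) (traj (f i) ηl x k))‖ := by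
            rw [hsum, norm_smul, Real.norm_eq_abs, abs_of_pos (inv_pos.mpr hKpos)]
        _ ≤ (K i : ℝ)⁻¹ * ∑ k ∈ Finset.range (K i), (L * (ηl * (k:ℝ) * Gf)) := by
            apply mul_le_mul_of_nonneg_left _ (inv_pos.mpr hKpos).le
            exact (norm_sum_le _ _).trans (Finset.sum_le_sum hterm)
        _ = L * ηl * Gf * ((K i:ℝ) - 1) / 2 := by
            rw [hsum2]
            field_simp
        _ ≤ D := by
            rw [hD]
            have hKle : (K i : ℝ) ≤ (Kmax:ℝ) := by exact_mod_cast hKmaxub i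
            have hprod : (0:ℝ) ≤ L * ηl * Gf := by positivity
            have := mul_le_mul_of_nonneg_left (sub_le_sub_right hKle (1:ℝ)) hprod
            linarith
    have hsg : ∀ i, ρ i * ‖gradient (f i) x‖ - ρ i * D - D * G
        ≤ ⟪gradient (f i) x, g t⟫_ℝ := by
      intro i
      have hKpos : (0:ℝ) < (K i : ℝ) := by exact_mod_cast hK i
      have h1 : gradient (f i) x = e i + (K i:ℝ)⁻¹ • s i := by
        have he' : e i = gradient (f i) x - (K i:ℝ)⁻¹ • s i := rfl
        rw [he']; abel
      have h2 : ⟪gradient (f i) x, g t⟫_ℝ = ⟪e i, g t⟫_ℝ + (K i:ℝ)⁻¹ * (ρ i * ‖s i‖) := by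
        conv_lhs => rw [h1]
        rw [inner_add_left, real_inner_smul_left, hsinner i]
      have h3 : ‖gradient (f i) x‖ ≤ ‖e i‖ + (K i:ℝ)⁻¹ * ‖s i‖ := by
        conv_lhs => rw [h1]
        refine (norm_add_le _ _).trans ?_
        rw [norm_smul, Real.norm_eq_abs, abs_of_pos (inv_pos.mpr hKpos)]
      have h4 : -(D * G) ≤ ⟪e i, g t⟫_ℝ := by
        have ha := abs_real_inner_le_norm (e i) (g t)
        have hbb : ‖e i‖ * ‖g t‖ ≤ D * G :=
          mul_le_mul (heD i) (hG t) (norm_nonneg _) hD0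
        have := neg_abs_le ⟪e i, g t⟫_ℝ
        linarith
      have h5 := mul_le_mul_of_nonneg_left h3 (hρpos i).le
      have h6 := mul_le_mul_of_nonneg_left (heD i) (hρpos i).le
      linarith [h2, h4, h5, h6]
    have hFg : ⟪gradient F x, g t⟫_ℝ = ∑ i, ρ i * ⟪gradient (f i) x, g t⟫_ℝ := by
      rw [hgradF x, sum_inner]
      exact Finset.sum_congr rfl fun i _ => real_inner_smul_left _ _ _
    have h5 : ∑ i, (ρ i * (ρ i * ‖gradient (f i) x‖ - ρ i * D - D * G))
        ≤ ⟪gradient F x, g t⟫_ℝ := by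
      rw [hFg]
      exact Finset.sum_le_sum fun i _ => mul_le_mul_of_nonneg_left (hsg i) (hρpos i).le
    have h6 : ∑ i, (ρ i * (ρ i * ‖gradient (f i) x‖ - ρ i * D - D * G))
        = ∑ i, ρ i ^ 2 * ‖gradient (f i) x‖ - D * (∑ i, ρ i ^ 2) - D * G := by
      have e2 : ∑ i, ρ i * (ρ i * D) = D * ∑ i, ρ i ^ 2 := by
        rw [Finset.mul_sum]
        exact Finset.sum_congr rfl fun i _ => by ring
      have e3 : ∑ i, ρ i * (D * G) = D * G := by
        rw [← Finset.sum_mul, hρsum, one_mul]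
      simp only [mul_sub]
      rw [Finset.sum_sub_distrib, Finset.sum_sub_distrib, e2, e3]
      congr 2
      exact Finset.sum_congr rfl fun i _ => by ring
    have h7 : c * ‖gradient F x‖ ^ 2 ≤ ∑ i, ρ i ^ 2 * ‖gradient (f i) x‖ := by
      have hnorm : ‖gradient F x‖ ≤ ∑ i, ρ i * ‖gradient (f i) x‖ := by
        rw [hgradF x]
        refine (norm_sum_le _ _).trans (le_of_eq ?_)
        exact Finset.sum_congr rfl fun i _ => by
          rw [norm_smul, Real.norm_eq_abs, abs_of_pos (hρpos i)]
      have hmin : ρmin * ∑ i, ρ i * ‖gradient (f i) x‖ ≤ ∑ i, ρ i ^ 2 * ‖gradient (f i) x‖ := by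
        rw [Finset.mul_sum]
        apply Finset.sum_le_sum
        intro i _
        have hg0 : (0:ℝ) ≤ ρ i * ‖gradient (f i) x‖ :=
          mul_nonneg (hρpos i).le (norm_nonneg (gradient (f i) x))
        calc ρmin * (ρ i * ‖gradient (f i) x‖) ≤ ρ i * (ρ i * ‖gradient (f i) x‖) :=
              mul_le_mul_of_nonneg_right (hρminlb i) hg0
          _ = ρ i ^ 2 * ‖gradient (f i) x‖ := by ring
      have hFgf : ‖gradient F x‖ ≤ Gf := hgradFle x
      have h8 : c * ‖gradient F x‖ ^ 2 ≤ ρmin * ‖gradient F x‖ := by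
        rw [hc, div_mul_eq_mul_div, div_le_iff₀ hGf0]
        have hmm : ρmin * ‖gradient F x‖ * ‖gradient F x‖ ≤ ρmin * ‖gradient F x‖ * Gf :=
          mul_le_mul_of_nonneg_left hFgf (by positivity)
        calc ρmin * ‖gradient F x‖ ^ 2 = ρmin * ‖gradient F x‖ * ‖gradient F x‖ := by ring
          _ ≤ ρmin * ‖gradient F x‖ * Gf := hmm
      have h9 := mul_le_mul_of_nonneg_left hnorm hρmin0.le
      linarith
    have hBD : D * ((∑ i, ρ i ^ 2) + G) = Bdrift * (ηl * ((Kmax:ℝ) - 1)) := by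
      rw [hD, hB]
      ring
    linarith [h5, h6.symm.le, h6.le, h7, hBD.le, hBD.symm.le]
  -- per-step descent
  set A : ℝ := ηg * (Bdrift * (ηl * ((Kmax:ℝ) - 1))) + L / 2 * ηg ^ 2 * G ^ 2 with hAdef
  have hA : ∀ t, c * ηg * ‖gradient F (θt t)‖ ^ 2 ≤ (F (θt t) - F (θt (t+1))) + A := by
    intro t
    have hdesc := craft_descent hL0 hFdiff hFLip (θt t) (θt (t+1))
    rw [hstep t] at hdesc
    have h8 : θt t - ηg • g t - θt t = -(ηg • g t) := by abel
    rw [h8, inner_neg_right, real_inner_smul_right] at hdesc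
    have h9 : ‖-(ηg • g t)‖ ^ 2 = ηg ^ 2 * ‖g t‖ ^ 2 := by
      rw [norm_neg, norm_smul, Real.norm_eq_abs, abs_of_pos hηg, mul_pow]
    rw [h9] at hdesc
    have h10 := mul_le_mul_of_nonneg_left (key t) hηg.le
    have h11 : ‖g t‖ ^ 2 ≤ G ^ 2 := by nlinarith [norm_nonneg (g t), hG t]
    have h12 : L / 2 * (ηg ^ 2 * ‖g t‖ ^ 2) ≤ L / 2 * (ηg ^ 2 * G ^ 2) := by
      apply mul_le_mul_of_nonneg_left _ (by positivity)
      exact mul_le_mul_of_nonneg_left h11 (by positivity)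
    rw [hAdef, hstep t]
    linarith [hdesc, h10, h12]
  -- summation
  have hsum : c * ηg * ∑ t ∈ Finset.range T, ‖gradient F (θt t)‖ ^ 2
      ≤ (F (θt 0) - Fstar) + T * A := by
    calc c * ηg * ∑ t ∈ Finset.range T, ‖gradient F (θt t)‖ ^ 2
        = ∑ t ∈ Finset.range T, c * ηg * ‖gradient F (θt t)‖ ^ 2 := Finset.mul_sum _ _ _
      _ ≤ ∑ t ∈ Finset.range T, ((F (θt t) - F (θt (t+1))) + A) :=
          Finset.sum_le_sum fun t _ => hA t
      _ = (F (θt 0) - F (θt T)) + T * A := by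
          rw [Finset.sum_add_distrib, Finset.sum_range_sub' (fun t => F (θt t)),
            Finset.sum_const, Finset.card_range, nsmul_eq_mul]
      _ ≤ (F (θt 0) - Fstar) + T * A := by linarith [hFstar (θt T)]
  have hT0 : (0:ℝ) < T := by exact_mod_cast hT
  have hrhseq : (F (θt 0) - Fstar) / (c * ηg * T) + L * ηg * G ^ 2 / (2 * c)
      + Bdrift / c * (ηl * ((Kmax:ℝ) - 1))
      = ((F (θt 0) - Fstar) + T * A) / (c * ηg * T) := by
    rw [hAdef]
    field_simp
    ring
  rw [hrhseq]
  have hS : ∑ t ∈ Finset.range T, ‖gradient F (θt t)‖ ^ 2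
      ≤ ((F (θt 0) - Fstar) + T * A) / (c * ηg) := by
    rw [le_div_iff₀ (by positivity)]
    nlinarith [hsum]
  calc (1 / (T:ℝ)) * ∑ t ∈ Finset.range T, ‖gradient F (θt t)‖ ^ 2
      = (∑ t ∈ Finset.range T, ‖gradient F (θt t)‖ ^ 2) / T := by
        rw [one_div, inv_mul_eq_div]
    _ ≤ (((F (θt 0) - Fstar) + T * A) / (c * ηg)) / T := by gcongr
    _ = ((F (θt 0) - Fstar) + T * A) / (c * ηg * T) := by rw [div_div]
end

section
/- (Average gradient-norm bound.) Under the hypotheses of the CRAFT convergence theorem—f_1, …, f_N : ℝ^d → ℝ L-smooth with ‖∇f_i‖ ≤ G_f, weights ρ_i > 0 summing to 1 with ρ_min = min_i ρ_i, F = Σ ρ_i f_i bounded below by F⋆, server trajectory θ_{t+1} = θ_t − η_g g_t where at each round the nonzero accumulated client updates g_i^t (from K_i local gradient-descent steps of rate η_l starting at θ_t, K_max = max_i K_i) satisfy ⟨g_i^t/‖g_i^t‖, g_t⟩ = ρ_i for all i and ‖g_t‖ ≤ G—one has, for any T ≥ 1: (1/T) Σ_{t=0}^{T−1} ‖∇F(θ_t)‖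 ≤ (F(θ_0) − F⋆)/(ρ_min η_g T) + L η_g G²/(2 ρ_min) + (B_drift/ρ_min) η_l (K_max − 1), where B_drift = (L G_f/2)(G + Σ_{i=1}^N ρ_i²). -/
open scoped InnerProductSpace BigOperators

section Aux

lemma descent_lemma {E : Type*} [NormedAddCommGroup E] [InnerProductSpace ℝ E] [CompleteSpace E]
    (f : E → ℝ) (L : ℝ) (hL : 0 ≤ L) (hdiff : Differentiable ℝ f)
    (hLip : ∀ x y, ‖gradient f x - gradient f y‖ ≤ L * ‖x - y‖)
    (x y : E) :
    f y ≤ f x + ⟪gradient f x, y - x⟫_ℝ + L / 2 * ‖y - x‖ ^ 2 := by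
  set v := y - x with hv
  have hgradcont : Continuous (fun z => gradient f z) := by
    apply (LipschitzWith.of_dist_le_mul (K := L.toNNReal) (f := fun z => gradient f z) ?_).continuous
    intro a b
    simp only [dist_eq_norm, Real.coe_toNNReal L hL]
    exact hLip a b
  have hline : ∀ t : ℝ, HasDerivAt (fun s : ℝ => x + s • v) v t := by
    intro t
    simpa using ((hasDerivAt_id t).smul_const v).const_add x
  have hphi : ∀ t : ℝ, HasDerivAt (fun s : ℝ => f (x + s • v))
      (⟪gradient f (x + t • v), v⟫_ℝ) t := by
    intro t
    have h1 : HasFDerivAt f ((InnerProductSpace.toDual ℝ E) (gradient f (x + t • v))) (x + t • v) :=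
      (hdiff (x + t • v)).hasGradientAt.hasFDerivAt
    have h2 := h1.comp_hasDerivAt t (hline t)
    simp only [InnerProductSpace.toDual_apply_apply] at h2
    exact h2
  have hcont : Continuous (fun t : ℝ => ⟪gradient f (x + t • v), v⟫_ℝ) := by
    exact (hgradcont.comp (by continuity)).inner continuous_const
  have hint : ∫ t in (0:ℝ)..1, ⟪gradient f (x + t • v), v⟫_ℝ = f y - f x := by
    rw [intervalIntegral.integral_eq_sub_of_hasDerivAt (fun t _ => hphi t)
      (hcont.intervalIntegrable 0 1)]
    simp [hv]
  have hmono : ∫ t in (0:ℝ)..1, (⟪gradient f (x + t • v), v⟫_ℝ - ⟪gradient f x, v⟫_ℝ)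
      ≤ ∫ t in (0:ℝ)..1, L * t * ‖v‖ ^ 2 := by
    apply intervalIntegral.integral_mono_on (by norm_num)
    · exact (hcont.sub continuous_const).intervalIntegrable 0 1
    · exact (by continuity : Continuous fun t : ℝ => L * t * ‖v‖ ^ 2).intervalIntegrable 0 1
    · intro t ht
      have h1 : ⟪gradient f (x + t • v), v⟫_ℝ - ⟪gradient f x, v⟫_ℝ
          = ⟪gradient f (x + t • v) - gradient f x, v⟫_ℝ := by
        rw [inner_sub_left]
      rw [h1]
      calc ⟪gradient f (x + t • v) - gradient f x, v⟫_ℝ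
          ≤ ‖gradient f (x + t • v) - gradient f x‖ * ‖v‖ := real_inner_le_norm _ _
        _ ≤ (L * ‖x + t • v - x‖) * ‖v‖ :=
            mul_le_mul_of_nonneg_right (hLip _ _) (norm_nonneg _)
        _ = L * t * ‖v‖ ^ 2 := by
            rw [add_sub_cancel_left, norm_smul]
            simp [Real.norm_eq_abs, abs_of_nonneg ht.1]
            ring
  have hval : ∫ t in (0:ℝ)..1, L * t * ‖v‖ ^ 2 = L / 2 * ‖v‖ ^ 2 := by
    have : (fun t : ℝ => L * t * ‖v‖ ^ 2) = fun t : ℝ => (L * ‖v‖ ^ 2) * t := by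
      funext t; ring
    rw [this, intervalIntegral.integral_const_mul, integral_id]
    ring
  have hsplit : ∫ t in (0:ℝ)..1, (⟪gradient f (x + t • v), v⟫_ℝ - ⟪gradient f x, v⟫_ℝ)
      = (f y - f x) - ⟪gradient f x, v⟫_ℝ := by
    rw [intervalIntegral.integral_sub (hcont.intervalIntegrable 0 1)
      (intervalIntegrable_const), hint]
    simp
  rw [hsplit, hval] at hmono
  linarith

lemma gradient_weighted_sum {E : Type*} [NormedAddCommGroup E] [InnerProductSpace ℝ E]
    [CompleteSpace E] {N : ℕ} (f : Fin N → E → ℝ) (ρ : Fin N → ℝ)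
    (hdiff : ∀ i, Differentiable ℝ (f i)) (x : E) :
    HasGradientAt (fun x => ∑ i, ρ i * f i x) (∑ i, ρ i • gradient (f i) x) x := by
  have h : HasFDerivAt (fun x => ∑ i, ρ i * f i x)
      (∑ i, ρ i • ((InnerProductSpace.toDual ℝ E) (gradient (f i) x))) x := by
    apply HasFDerivAt.fun_sum
    intro i _
    exact ((hdiff i x).hasGradientAt.hasFDerivAt).const_mul (ρ i)
  rw [hasFDerivAt_iff_hasGradientAt] at h
  convert h using 1
  simp [map_sum, map_smul, gradient]

lemma sum_range_cast_id (K : ℕ) : (∑ k ∈ Finset.range K, (k : ℝ)) = K * (K - 1) / 2 := by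
  induction K with
  | zero => simp
  | succ n ih => rw [Finset.sum_range_succ, ih]; push_cast; ring

end Aux

lemma traj_drift {E : Type*} [NormedAddCommGroup E] [InnerProductSpace ℝ E] [CompleteSpace E]
    (f : E → ℝ) (ηl : ℝ) (hηl : 0 ≤ ηl) (Gf : ℝ) (hGf : ∀ z, ‖gradient f z‖ ≤ Gf)
    (θ : E) : ∀ k : ℕ, ‖traj f ηl θ k - θ‖ ≤ k * ηl * Gf := by
  intro k
  induction k with
  | zero => simp [traj]
  | succ n ih =>
      have h1 : traj f ηl θ (n+1) - θ
          = (traj f ηl θ n - θ) - ηl • gradient f (traj f ηl θ n) := by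
        simp [traj]; abel
      rw [h1]
      calc ‖(traj f ηl θ n - θ) - ηl • gradient f (traj f ηl θ n)‖
          ≤ ‖traj f ηl θ n - θ‖ + ‖ηl • gradient f (traj f ηl θ n)‖ := norm_sub_le _ _
        _ ≤ n * ηl * Gf + ηl * Gf := by
            apply add_le_add ih
            rw [norm_smul, Real.norm_eq_abs, abs_of_nonneg hηl]
            exact mul_le_mul_of_nonneg_left (hGf _) hηl
        _ = (n+1 : ℕ) * ηl * Gf := by push_cast; ring


/-- **Average gradient-norm bound.**
For a server trajectory `θ_{t+1} = θ_t − η_g g_t` whose aggregates satisfy the exact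
alignment constraints with the (nonzero) accumulated client updates and `‖g_t‖ ≤ G`,
`(1/T) Σ_{t<T} ‖∇F(θ_t)‖ ≤ (F(θ₀)−F⋆)/(ρ_min η_g T) + L η_g G²/(2 ρ_min)
  + (B_drift/ρ_min) η_l (K_max − 1)`. -/
theorem average_gradient_norm_bound {d N : ℕ} (hd : 1 ≤ d) (hN : 1 ≤ N)
    (f : Fin N → EuclideanSpace ℝ (Fin d) → ℝ) (L Gf : ℝ)
    (hdiff : ∀ i, Differentiable ℝ (f i))
    (hLip : ∀ i x y, ‖gradient (f i) x - gradient (f i) y‖ ≤ L * ‖x - y‖)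
    (hGf : ∀ i x, ‖gradient (f i) x‖ ≤ Gf)
    (ρ : Fin N → ℝ) (hρpos : ∀ i, 0 < ρ i) (hρsum : ∑ i, ρ i = 1)
    (F : EuclideanSpace ℝ (Fin d) → ℝ) (hF : F = fun x => ∑ i, ρ i * f i x)
    (Fstar : ℝ) (hFstar : ∀ x, Fstar ≤ F x)
    (ρmin : ℝ) (hρminlb : ∀ i, ρmin ≤ ρ i) (hρminmem : ∃ i, ρ i = ρmin)
    (ηl ηg : ℝ) (hηl : 0 < ηl) (hηg : 0 < ηg)
    (K : Fin N → ℕ) (hK : ∀ i, 1 ≤ K i)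
    (Kmax : ℕ) (hKmaxub : ∀ i, K i ≤ Kmax) (hKmaxmem : ∃ i, K i = Kmax)
    (θt : ℕ → EuclideanSpace ℝ (Fin d)) (g : ℕ → EuclideanSpace ℝ (Fin d))
    (hstep : ∀ t, θt (t + 1) = θt t - ηg • g t)
    (gI : ℕ → Fin N → EuclideanSpace ℝ (Fin d))
    (hgI : ∀ t i, gI t i = ηl • ∑ k ∈ Finset.range (K i),
        gradient (f i) (traj (f i) ηl (θt t) k))
    (hne : ∀ t i, gI t i ≠ 0)
    (halign : ∀ t i, ⟪‖gI t i‖⁻¹ • gI t i, g t⟫_ℝ = ρ i)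
    (G : ℝ) (hG : ∀ t, ‖g t‖ ≤ G)
    (Bdrift : ℝ) (hB : Bdrift = L * Gf / 2 * (G + ∑ i, (ρ i) ^ 2))
    (T : ℕ) (hT : 1 ≤ T) :
    (1 / (T : ℝ)) * ∑ t ∈ Finset.range T, ‖gradient F (θt t)‖ ≤
      (F (θt 0) - Fstar) / (ρmin * ηg * T) + L * ηg * G ^ 2 / (2 * ρmin)
      + Bdrift / ρmin * (ηl * ((Kmax : ℝ) - 1)) := by
  -- basic positivity facts
  obtain ⟨i₀, hi₀⟩ := hρminmem
  have hρmin0 : 0 < ρmin := hi₀ ▸ hρpos i₀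
  have i1 : Fin N := ⟨0, hN⟩
  have hGf0 : 0 ≤ Gf := le_trans (norm_nonneg _) (hGf i1 0)
  have hG0 : 0 ≤ G := le_trans (norm_nonneg _) (hG 0)
  have hL0 : 0 ≤ L := by
    have hx := hLip i1 0 (EuclideanSpace.single ⟨0, hd⟩ (1:ℝ))
    have h1 : ‖(0 : EuclideanSpace ℝ (Fin d)) - EuclideanSpace.single ⟨0, hd⟩ (1:ℝ)‖ = 1 := by
      simp [EuclideanSpace.norm_single]
    rw [h1, mul_one] at hx
    exact le_trans (norm_nonneg _) hx
  have hKmax1 : 1 ≤ Kmax := le_trans (hK i1) (hKmaxub i1)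
  have hKmaxR : (1:ℝ) ≤ (Kmax : ℝ) := by exact_mod_cast hKmax1
  -- gradient of F
  have hFgrad : ∀ x, gradient F x = ∑ i, ρ i • gradient (f i) x := by
    intro x
    rw [hF]
    exact (gradient_weighted_sum f ρ hdiff x).gradient
  have hFdiff : Differentiable ℝ F := by
    intro x
    rw [hF]
    exact (gradient_weighted_sum f ρ hdiff x).differentiableAt
  have hFLip : ∀ x y, ‖gradient F x - gradient F y‖ ≤ L * ‖x - y‖ := by
    intro x y
    rw [hFgrad, hFgrad, ← Finset.sum_sub_distrib]
    calc ‖∑ i, (ρ i • gradient (f i) x - ρ i • gradient (f i) y)‖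
        ≤ ∑ i, ‖ρ i • gradient (f i) x - ρ i • gradient (f i) y‖ := norm_sum_le _ _
      _ ≤ ∑ i, ρ i * (L * ‖x - y‖) := by
          apply Finset.sum_le_sum
          intro i _
          rw [← smul_sub, norm_smul, Real.norm_eq_abs, abs_of_pos (hρpos i)]
          exact mul_le_mul_of_nonneg_left (hLip i x y) (hρpos i).le
      _ = L * ‖x - y‖ := by rw [← Finset.sum_mul, hρsum, one_mul]
  -- drift constants
  set Dmax : ℝ := L * ηl * Gf * ((Kmax : ℝ) - 1) / 2 with hDmaxdef
  have hDmax0 : 0 ≤ Dmax := by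
    apply div_nonneg _ (by norm_num)
    apply mul_nonneg (mul_nonneg (mul_nonneg hL0 hηl.le) hGf0)
    linarith
  have hρsq : ρmin ≤ ∑ i, (ρ i) ^ 2 := by
    calc ρmin = ∑ i, ρ i * ρmin := by rw [← Finset.sum_mul, hρsum, one_mul]
      _ ≤ ∑ i, (ρ i) ^ 2 := by
          apply Finset.sum_le_sum
          intro i _
          rw [sq]
          exact mul_le_mul_of_nonneg_left (hρminlb i) (hρpos i).le
  -- per-round alignment bound
  have hround : ∀ t, ρmin * ‖gradient F (θt t)‖ ≤
      ⟪gradient F (θt t), g t⟫_ℝ + Bdrift * (ηl * ((Kmax : ℝ) - 1)) := by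
    intro t
    set θ := θt t with hθ
    set u : Fin N → EuclideanSpace ℝ (Fin d) := fun i => gradient (f i) θ with hu
    set D : Fin N → ℝ := fun i => L * ηl * Gf * ((K i : ℝ) - 1) / 2 with hD
    set c : Fin N → ℝ := fun i => ηl * (K i : ℝ) with hc
    have hcpos : ∀ i, 0 < c i := by
      intro i
      have : (0:ℝ) < (K i : ℝ) := by exact_mod_cast hK i
      exact mul_pos hηl this
    set s : Fin N → ℝ := fun i => ‖gI t i‖ / c i with hs
    have hs0 : ∀ i, 0 ≤ s i := fun i => div_nonneg (norm_nonneg _) (hcpos i).le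
    have hD0 : ∀ i, 0 ≤ D i := by
      intro i
      have : (1:ℝ) ≤ (K i : ℝ) := by exact_mod_cast hK i
      apply div_nonneg _ (by norm_num)
      apply mul_nonneg (mul_nonneg (mul_nonneg hL0 hηl.le) hGf0)
      linarith
    have hDle : ∀ i, D i ≤ Dmax := by
      intro i
      have : (K i : ℝ) ≤ (Kmax : ℝ) := by exact_mod_cast hKmaxub i
      apply div_le_div_of_nonneg_right ?_ (by norm_num)
      apply mul_le_mul_of_nonneg_left _ (mul_nonneg (mul_nonneg hL0 hηl.le) hGf0)
      linarith
    -- inner product of raw aggregate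
    have hinner : ∀ i, ⟪gI t i, g t⟫_ℝ = ‖gI t i‖ * ρ i := by
      intro i
      have hn : ‖gI t i‖ ≠ 0 := norm_ne_zero_iff.mpr (hne t i)
      have h1 := halign t i
      rw [real_inner_smul_left] at h1
      have h2 : ‖gI t i‖ * (‖gI t i‖⁻¹ * ⟪gI t i, g t⟫_ℝ) = ‖gI t i‖ * ρ i := by rw [h1]
      rwa [← mul_assoc, mul_inv_cancel₀ hn, one_mul] at h2
    -- error bound between gradient and normalized aggregate
    have herr : ∀ i, ‖u i - (c i)⁻¹ • gI t i‖ ≤ D i := by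
      intro i
      have hbig : ‖c i • u i - gI t i‖ ≤ c i * D i := by
        have hrw : c i • u i - gI t i
            = ηl • (∑ k ∈ Finset.range (K i), (u i - gradient (f i) (traj (f i) ηl θ k))) := by
          have hKs : c i • u i = ηl • ∑ _k ∈ Finset.range (K i), u i := by
            rw [Finset.sum_const, Finset.card_range]
            show (ηl * (K i : ℝ)) • u i = ηl • ((K i) • u i)
            rw [mul_smul, Nat.cast_smul_eq_nsmul]
          rw [hgI t i, ← hθ, hKs, ← smul_sub, ← Finset.sum_sub_distrib]
        rw [hrw, norm_smul, Real.norm_eq_abs, abs_of_pos hηl]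
        have hsum : ‖∑ k ∈ Finset.range (K i), (u i - gradient (f i) (traj (f i) ηl θ k))‖
            ≤ L * ηl * Gf * ((K i : ℝ) * ((K i : ℝ) - 1) / 2) := by
          calc ‖∑ k ∈ Finset.range (K i), (u i - gradient (f i) (traj (f i) ηl θ k))‖
              ≤ ∑ k ∈ Finset.range (K i), ‖u i - gradient (f i) (traj (f i) ηl θ k)‖ :=
                norm_sum_le _ _
            _ ≤ ∑ k ∈ Finset.range (K i), L * ηl * Gf * (k : ℝ) := by
                apply Finset.sum_le_sum
                intro k _
                calc ‖u i - gradient (f i) (traj (f i) ηl θ k)‖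
                    ≤ L * ‖θ - traj (f i) ηl θ k‖ := hLip i θ _
                  _ = L * ‖traj (f i) ηl θ k - θ‖ := by rw [norm_sub_rev]
                  _ ≤ L * ((k : ℝ) * ηl * Gf) :=
                      mul_le_mul_of_nonneg_left
                        (traj_drift (f i) ηl hηl.le Gf (hGf i) θ k) hL0
                  _ = L * ηl * Gf * (k : ℝ) := by ring
            _ = L * ηl * Gf * ((K i : ℝ) * ((K i : ℝ) - 1) / 2) := by
                rw [← Finset.mul_sum, sum_range_cast_id]
        calc ηl * ‖∑ k ∈ Finset.range (K i), (u i - gradient (f i) (traj (f i) ηl θ k))‖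
            ≤ ηl * (L * ηl * Gf * ((K i : ℝ) * ((K i : ℝ) - 1) / 2)) :=
              mul_le_mul_of_nonneg_left hsum hηl.le
          _ = c i * D i := by rw [hc, hD]; ring
      have heq : u i - (c i)⁻¹ • gI t i = (c i)⁻¹ • (c i • u i - gI t i) := by
        rw [smul_sub, smul_smul, inv_mul_cancel₀ (hcpos i).ne', one_smul]
      rw [heq, norm_smul, Real.norm_eq_abs, abs_of_pos (inv_pos.mpr (hcpos i))]
      calc (c i)⁻¹ * ‖c i • u i - gI t i‖ ≤ (c i)⁻¹ * (c i * D i) :=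
            mul_le_mul_of_nonneg_left hbig (inv_pos.mpr (hcpos i)).le
        _ = D i := inv_mul_cancel_left₀ (hcpos i).ne' (D i)
    -- per-client bounds
    have hub : ∀ i, ‖u i‖ ≤ s i + D i := by
      intro i
      calc ‖u i‖ = ‖(c i)⁻¹ • gI t i + (u i - (c i)⁻¹ • gI t i)‖ := by congr 1; abel
        _ ≤ ‖(c i)⁻¹ • gI t i‖ + ‖u i - (c i)⁻¹ • gI t i‖ := norm_add_le _ _
        _ ≤ s i + D i := by
            apply add_le_add _ (herr i)
            rw [norm_smul, Real.norm_eq_abs, abs_of_pos (inv_pos.mpr (hcpos i))]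
            show (c i)⁻¹ * ‖gI t i‖ ≤ ‖gI t i‖ / c i
            rw [div_eq_inv_mul]
    have hlb : ∀ i, s i * ρ i - D i * G ≤ ⟪u i, g t⟫_ℝ := by
      intro i
      have h1 : ⟪u i, g t⟫_ℝ = ⟪(c i)⁻¹ • gI t i, g t⟫_ℝ + ⟪u i - (c i)⁻¹ • gI t i, g t⟫_ℝ := by
        rw [← inner_add_left]
        congr 1
        abel
      have h2 : ⟪(c i)⁻¹ • gI t i, g t⟫_ℝ = s i * ρ i := by
        rw [real_inner_smul_left, hinner i]
        show (c i)⁻¹ * (‖gI t i‖ * ρ i) = ‖gI t i‖ / c i * ρ i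
        rw [div_eq_inv_mul, mul_assoc]
      have h3 : -(D i * G) ≤ ⟪u i - (c i)⁻¹ • gI t i, g t⟫_ℝ := by
        have := abs_real_inner_le_norm (u i - (c i)⁻¹ • gI t i) (g t)
        have h4 : ‖u i - (c i)⁻¹ • gI t i‖ * ‖g t‖ ≤ D i * G :=
          mul_le_mul (herr i) (hG t) (norm_nonneg _) (hD0 i)
        have := neg_abs_le ⟪u i - (c i)⁻¹ • gI t i, g t⟫_ℝ
        have habs := abs_real_inner_le_norm (u i - (c i)⁻¹ • gI t i) (g t)
        linarith
      rw [h1, h2]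
      linarith
    -- assemble
    have hnormF : ‖gradient F θ‖ ≤ ∑ i, ρ i * (s i + D i) := by
      rw [hFgrad]
      calc ‖∑ i, ρ i • gradient (f i) θ‖ ≤ ∑ i, ‖ρ i • gradient (f i) θ‖ := norm_sum_le _ _
        _ ≤ ∑ i, ρ i * (s i + D i) := by
            apply Finset.sum_le_sum
            intro i _
            rw [norm_smul, Real.norm_eq_abs, abs_of_pos (hρpos i)]
            exact mul_le_mul_of_nonneg_left (hub i) (hρpos i).le
    have hinnerF : ∑ i, ρ i * (s i * ρ i - D i * G) ≤ ⟪gradient F θ, g t⟫_ℝ := by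
      rw [hFgrad, sum_inner]
      apply Finset.sum_le_sum
      intro i _
      rw [real_inner_smul_left]
      exact mul_le_mul_of_nonneg_left (hlb i) (hρpos i).le
    have hsD : ∑ i, ρ i * D i ≤ Dmax := by
      calc ∑ i, ρ i * D i ≤ ∑ i, ρ i * Dmax := by
            apply Finset.sum_le_sum
            intro i _
            exact mul_le_mul_of_nonneg_left (hDle i) (hρpos i).le
        _ = Dmax := by rw [← Finset.sum_mul, hρsum, one_mul]
    have hsD0 : 0 ≤ ∑ i, ρ i * D i :=
      Finset.sum_nonneg (fun i _ => mul_nonneg (hρpos i).le (hD0 i))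
    have h5 : ρmin * ∑ i, ρ i * s i ≤ ∑ i, (ρ i)^2 * s i := by
      rw [Finset.mul_sum]
      apply Finset.sum_le_sum
      intro i _
      rw [sq]
      calc ρmin * (ρ i * s i) = (ρmin * s i) * ρ i := by ring
        _ ≤ (ρ i * s i) * ρ i := by
            apply mul_le_mul_of_nonneg_right _ (hρpos i).le
            exact mul_le_mul_of_nonneg_right (hρminlb i) (hs0 i)
        _ = ρ i * ρ i * s i := by ring
    have h6 : ρmin * ∑ i, ρ i * D i ≤ (∑ i, (ρ i)^2) * Dmax :=
      mul_le_mul hρsq hsD hsD0 (le_trans hρmin0.le hρsq)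
    have h7 : ∑ i, (ρ i)^2 * s i - G * Dmax ≤ ⟪gradient F θ, g t⟫_ℝ := by
      have h8 : ∑ i, ρ i * (s i * ρ i - D i * G) = ∑ i, (ρ i)^2 * s i - G * ∑ i, ρ i * D i := by
        rw [Finset.mul_sum, ← Finset.sum_sub_distrib]
        apply Finset.sum_congr rfl
        intro i _
        ring
      have h9 : G * ∑ i, ρ i * D i ≤ G * Dmax := mul_le_mul_of_nonneg_left hsD hG0
      rw [h8] at hinnerF
      linarith
    have hBd : Bdrift * (ηl * ((Kmax : ℝ) - 1)) = (G + ∑ i, (ρ i)^2) * Dmax := by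
      rw [hB, hDmaxdef]; ring
    have h10 : ρmin * ‖gradient F θ‖ ≤ ρmin * ∑ i, ρ i * (s i + D i) :=
      mul_le_mul_of_nonneg_left hnormF hρmin0.le
    have h11 : ρmin * ∑ i, ρ i * (s i + D i)
        = ρmin * ∑ i, ρ i * s i + ρmin * ∑ i, ρ i * D i := by
      have h12 : ∑ i, ρ i * (s i + D i) = ∑ i, ρ i * s i + ∑ i, ρ i * D i := by
        rw [← Finset.sum_add_distrib]
        exact Finset.sum_congr rfl (fun i _ => by ring)
      rw [h12, mul_add]
    rw [hBd]
    rw [h11] at h10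
    linarith
  -- per-round descent
  have hdesc : ∀ t, ηg * ⟪gradient F (θt t), g t⟫_ℝ
      ≤ F (θt t) - F (θt (t+1)) + L / 2 * ηg ^ 2 * G ^ 2 := by
    intro t
    have h1 := descent_lemma F L hL0 hFdiff hFLip (θt t) (θt (t+1))
    have h2 : θt (t+1) - θt t = -(ηg • g t) := by rw [hstep t]; abel
    rw [h2, inner_neg_right, real_inner_smul_right] at h1
    have h3 : ‖-(ηg • g t)‖ ^ 2 = ηg ^ 2 * ‖g t‖ ^ 2 := by
      rw [norm_neg, norm_smul, Real.norm_eq_abs, abs_of_pos hηg, mul_pow]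
    rw [h3] at h1
    have h4 : ‖g t‖ ^ 2 ≤ G ^ 2 := by
      apply pow_le_pow_left₀ (norm_nonneg _) (hG t)
    have h5 : L / 2 * (ηg ^ 2 * ‖g t‖ ^ 2) ≤ L / 2 * ηg ^ 2 * G ^ 2 := by
      rw [← mul_assoc]
      apply mul_le_mul_of_nonneg_left h4
      positivity
    linarith
  -- per-round combined
  set C : ℝ := L / 2 * ηg ^ 2 * G ^ 2 + ηg * (Bdrift * (ηl * ((Kmax : ℝ) - 1))) with hCdef
  have hcomb : ∀ t, ρmin * ηg * ‖gradient F (θt t)‖ ≤ (F (θt t) - F (θt (t+1))) + C := by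
    intro t
    have h1 := hround t
    have h2 := hdesc t
    have h3 : ρmin * ηg * ‖gradient F (θt t)‖
        ≤ ηg * ⟪gradient F (θt t), g t⟫_ℝ + ηg * (Bdrift * (ηl * ((Kmax : ℝ) - 1))) := by
      calc ρmin * ηg * ‖gradient F (θt t)‖ = ηg * (ρmin * ‖gradient F (θt t)‖) := by ring
        _ ≤ ηg * (⟪gradient F (θt t), g t⟫_ℝ + Bdrift * (ηl * ((Kmax : ℝ) - 1))) :=
            mul_le_mul_of_nonneg_left h1 hηg.le
        _ = ηg * ⟪gradient F (θt t), g t⟫_ℝ + ηg * (Bdrift * (ηl * ((Kmax : ℝ) - 1))) := by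
            ring
    rw [hCdef]
    linarith
  -- sum over rounds
  have htel : ∑ t ∈ Finset.range T, (F (θt t) - F (θt (t+1))) = F (θt 0) - F (θt T) :=
    Finset.sum_range_sub' (fun t => F (θt t)) T
  have hsum : ρmin * ηg * ∑ t ∈ Finset.range T, ‖gradient F (θt t)‖
      ≤ (F (θt 0) - Fstar) + T * C := by
    rw [Finset.mul_sum]
    calc ∑ t ∈ Finset.range T, ρmin * ηg * ‖gradient F (θt t)‖
        ≤ ∑ t ∈ Finset.range T, ((F (θt t) - F (θt (t+1))) + C) :=
          Finset.sum_le_sum (fun t _ => hcomb t)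
      _ = (F (θt 0) - F (θt T)) + T * C := by
          rw [Finset.sum_add_distrib, htel, Finset.sum_const, Finset.card_range]
          ring
      _ ≤ (F (θt 0) - Fstar) + T * C := by
          have := hFstar (θt T)
          linarith
  -- divide
  have hTpos : (0:ℝ) < T := by exact_mod_cast hT
  have hdenpos : (0:ℝ) < ρmin * ηg * T := mul_pos (mul_pos hρmin0 hηg) hTpos
  set S : ℝ := ∑ t ∈ Finset.range T, ‖gradient F (θt t)‖ with hSdef
  calc (1 / (T:ℝ)) * S = (ρmin * ηg * S) / (ρmin * ηg * T) := by
        field_simp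
    _ ≤ ((F (θt 0) - Fstar) + T * C) / (ρmin * ηg * T) :=
        (div_le_div_iff_of_pos_right hdenpos).mpr hsum
    _ = (F (θt 0) - Fstar) / (ρmin * ηg * T) + L * ηg * G ^ 2 / (2 * ρmin)
        + Bdrift / ρmin * (ηl * ((Kmax : ℝ) - 1)) := by
        rw [hCdef]
        field_simp
        ring
end

section
/- (Per-client alignment lower bound under exact constraints.) Let f : ℝ^d → ℝ be differentiable with L-Lipschitz gradient and ‖∇f(θ)‖ ≤ G_f for all θ. Fix η_l > 0, K ≥ 1, a point θ ∈ ℝ^d, and let g_loc = η_l Σ_{k=0}^{K−1} ∇f(θ^{k}) be the accumulated update of the local gradient-descent trajectory θ^{0} = θ, θ^{k+1} = θ^{k} − η_l ∇f(θ^{k}). Suppose g_loc ≠ 0 and g ∈ ℝ^d satisfies ⟨g_loc/‖g_loc‖, g⟩ = ρ for some ρ > 0, with ‖g‖ ≤ G. Then ⟨∇f(θ), g⟩ ≥ ρ ‖∇f(θ)‖ − (L G_f/2)(ρ + G) η_l (K − 1). -/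
open scoped InnerProductSpace BigOperators

/-- **Per-client alignment lower bound under exact constraints.**
If `g_loc ≠ 0` is the accumulated local update and `⟪g_loc/‖g_loc‖, g⟫ = ρ > 0` with
`‖g‖ ≤ G`, then `⟪∇f(θ), g⟫ ≥ ρ‖∇f(θ)‖ − (L G_f/2)(ρ + G) η_l (K − 1)`. -/
theorem per_client_alignment_lower_bound {d : ℕ}
    (f : EuclideanSpace ℝ (Fin d) → ℝ) (L Gf : ℝ)
    (hdiff : Differentiable ℝ f)
    (hLip : ∀ x y, ‖gradient f x - gradient f y‖ ≤ L * ‖x - y‖)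
    (hGf : ∀ x, ‖gradient f x‖ ≤ Gf)
    (ηl : ℝ) (hηl : 0 < ηl) (K : ℕ) (hK : 1 ≤ K)
    (θ : EuclideanSpace ℝ (Fin d))
    (gloc : EuclideanSpace ℝ (Fin d))
    (hgloc : gloc = ηl • ∑ k ∈ Finset.range K, gradient f (traj f ηl θ k))
    (hne : gloc ≠ 0)
    (g : EuclideanSpace ℝ (Fin d)) (ρ : ℝ) (hρ : 0 < ρ)
    (halign : ⟪‖gloc‖⁻¹ • gloc, g⟫_ℝ = ρ)
    (G : ℝ) (hG : ‖g‖ ≤ G) :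
    ρ * ‖gradient f θ‖ - L * Gf / 2 * (ρ + G) * (ηl * ((K : ℝ) - 1)) ≤
      ⟪gradient f θ, g⟫_ℝ := by
  have hG0 : (0:ℝ) ≤ G := le_trans (norm_nonneg g) hG
  have hGf0 : (0:ℝ) ≤ Gf := le_trans (norm_nonneg _) (hGf θ)
  have hd : 0 < d := by
    by_contra h
    push_neg at h
    interval_cases d
    exact hne (Subsingleton.elim _ _)
  have hL0 : 0 ≤ L := by
    have h := hLip 0 (EuclideanSpace.single ⟨0, hd⟩ (1:ℝ))
    have hn : ‖(0:EuclideanSpace ℝ (Fin d)) - EuclideanSpace.single ⟨0, hd⟩ (1:ℝ)‖ = 1 := by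
      simp [EuclideanSpace.norm_single]
    rw [hn, mul_one] at h
    exact le_trans (norm_nonneg _) h
  have htraj : ∀ k : ℕ, ‖traj f ηl θ k - θ‖ ≤ ηl * k * Gf := by
    intro k
    induction k with
    | zero => simp [traj]
    | succ n ih =>
      have heq : traj f ηl θ (n+1) - θ
          = (traj f ηl θ n - θ) - ηl • gradient f (traj f ηl θ n) := by
        show traj f ηl θ n - ηl • gradient f (traj f ηl θ n) - θ = _
        abel
      rw [heq]
      have h2 : ‖ηl • gradient f (traj f ηl θ n)‖ ≤ ηl * Gf := by
        rw [norm_smul, Real.norm_eq_abs, abs_of_pos hηl]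
        exact mul_le_mul_of_nonneg_left (hGf _) hηl.le
      calc ‖(traj f ηl θ n - θ) - ηl • gradient f (traj f ηl θ n)‖
          ≤ ‖traj f ηl θ n - θ‖ + ‖ηl • gradient f (traj f ηl θ n)‖ := norm_sub_le _ _
        _ ≤ ηl * n * Gf + ηl * Gf := add_le_add ih h2
        _ = ηl * (↑(n+1)) * Gf := by push_cast; ring
  set S : EuclideanSpace ℝ (Fin d) := ∑ k ∈ Finset.range K, gradient f (traj f ηl θ k) with hSdef
  have hbound : ∀ k ∈ Finset.range K,
      ‖gradient f (traj f ηl θ k) - gradient f θ‖ ≤ L * Gf * ηl * k := by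
    intro k _
    calc ‖gradient f (traj f ηl θ k) - gradient f θ‖
        ≤ L * ‖traj f ηl θ k - θ‖ := hLip _ _
      _ ≤ L * (ηl * k * Gf) := mul_le_mul_of_nonneg_left (htraj k) hL0
      _ = L * Gf * ηl * k := by ring
  have hsum_id : ∑ k ∈ Finset.range K, (k:ℝ) = (K:ℝ) * ((K:ℝ) - 1) / 2 := by
    have h2 := Finset.sum_range_id_mul_two K
    have h3 := congrArg (Nat.cast : ℕ → ℝ) h2
    push_cast [Nat.cast_sub hK] at h3
    linarith
  have hΔ : ‖S - (K:ℝ) • gradient f θ‖ ≤ L * Gf * ηl * ((K:ℝ) * ((K:ℝ) - 1) / 2) := by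
    have heq : S - (K:ℝ) • gradient f θ
        = ∑ k ∈ Finset.range K, (gradient f (traj f ηl θ k) - gradient f θ) := by
      rw [Finset.sum_sub_distrib, Finset.sum_const, Finset.card_range]
      rw [Nat.cast_smul_eq_nsmul]
    rw [heq]
    calc ‖∑ k ∈ Finset.range K, (gradient f (traj f ηl θ k) - gradient f θ)‖
        ≤ ∑ k ∈ Finset.range K, ‖gradient f (traj f ηl θ k) - gradient f θ‖ :=
          norm_sum_le _ _
      _ ≤ ∑ k ∈ Finset.range K, L * Gf * ηl * k := Finset.sum_le_sum hbound
      _ = L * Gf * ηl * ∑ k ∈ Finset.range K, (k:ℝ) := by rw [Finset.mul_sum]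
      _ = L * Gf * ηl * ((K:ℝ) * ((K:ℝ) - 1) / 2) := by rw [hsum_id]
  set D : ℝ := L * Gf * ηl * ((K:ℝ) * ((K:ℝ) - 1) / 2) with hDdef
  have hKR : (1:ℝ) ≤ (K:ℝ) := by exact_mod_cast hK
  have hD0 : 0 ≤ D := by
    have : (0:ℝ) ≤ (K:ℝ) * ((K:ℝ) - 1) / 2 := by nlinarith
    positivity
  have hglocnorm : ‖gloc‖ = ηl * ‖S‖ := by
    rw [hgloc, norm_smul, Real.norm_eq_abs, abs_of_pos hηl]
  have hSpos : 0 < ‖S‖ := by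
    have h := norm_pos_iff.mpr hne
    rw [hglocnorm] at h
    nlinarith [norm_nonneg S]
  have hSg : ⟪S, g⟫_ℝ = ρ * ‖S‖ := by
    rw [hgloc, real_inner_smul_left, real_inner_smul_left, norm_smul,
      Real.norm_eq_abs, abs_of_pos hηl] at halign
    have hη := hηl.ne'
    have hS := hSpos.ne'
    obtain ⟨t, ht⟩ : ∃ t, ⟪S, g⟫_ℝ = t := ⟨_, rfl⟩
    rw [ht] at halign ⊢
    field_simp at halign
    have h2 : ηl * t = ηl * (ρ * ‖S‖) := by linear_combination ηl * halign
    exact mul_left_cancel₀ hη h2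
  have hCS : ⟪S - (K:ℝ) • gradient f θ, g⟫_ℝ ≤ D * G :=
    le_trans (real_inner_le_norm _ _) (mul_le_mul hΔ hG (norm_nonneg g) hD0)
  have hinner : ⟪S - (K:ℝ) • gradient f θ, g⟫_ℝ
      = ⟪S, g⟫_ℝ - (K:ℝ) * ⟪gradient f θ, g⟫_ℝ := by
    rw [inner_sub_left, real_inner_smul_left]
  have hSnorm : (K:ℝ) * ‖gradient f θ‖ - D ≤ ‖S‖ := by
    have h1 : ‖(K:ℝ) • gradient f θ‖ - ‖S‖ ≤ ‖(K:ℝ) • gradient f θ - S‖ :=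
      norm_sub_norm_le _ _
    rw [norm_sub_rev] at h1
    have h2 : ‖(K:ℝ) • gradient f θ‖ = (K:ℝ) * ‖gradient f θ‖ := by
      rw [norm_smul, Real.norm_eq_abs, abs_of_nonneg (by linarith)]
    linarith [le_trans h1 hΔ]
  have hKpos : (0:ℝ) < (K:ℝ) := by linarith
  rw [← mul_le_mul_iff_right₀ hKpos]
  have hmain : (K:ℝ) * ⟪gradient f θ, g⟫_ℝ = ρ * ‖S‖ - ⟪S - (K:ℝ) • gradient f θ, g⟫_ℝ := by
    rw [hinner, hSg]; ring
  have hρS : ρ * ((K:ℝ) * ‖gradient f θ‖ - D) ≤ ρ * ‖S‖ :=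
    mul_le_mul_of_nonneg_left hSnorm hρ.le
  have hexp : (K:ℝ) * (ρ * ‖gradient f θ‖ - L * Gf / 2 * (ρ + G) * (ηl * ((K : ℝ) - 1)))
      = ρ * ((K:ℝ) * ‖gradient f θ‖ - D) - D * G := by
    rw [hDdef]; ring
  rw [hexp, hmain]
  linarith
end
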